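/- Let z₁, z₂, z₃ be three pairwise non-parallel unit complex numbers (directions η_{b₁}, η_{b₂}, η_{b₃} with η_{b_j}² pairwise distinct), and let c₁ ∈ η_{b₁}ℝ, c₂ ∈ η_{b₂}ℝ, c₃ ∈ η_{b₃}ℝ be given values. Let d₁, d₂, d₃ ∈ ℂ be nonzero numbers with d₁ + d₂ + d₃ = 0 and η_{b_k}² · d_k = conj(d_k) for each k (i.e. d_k is parallel to conj(η_{b_k})ℝ). Then the system of three real-linear equations F + η_{b_k}²·conj(F) = 2c_k (k = 1,2,3) has a solution F ∈ ℂ if and only if c₁d₁ + c₂d₂ + c₃d₃ = 0. -/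

import Mathlib

open Complex ComplexConjugate

theorem stmt1 (η₁ η₂ η₃ c₁ c₂ c₃ d₁ d₂ d₃ : ℂ)
    (hη₁ : ‖η₁‖ = 1) (hη₂ : ‖η₂‖ = 1) (hη₃ : ‖η₃‖ = 1)
    (h12 : η₁ ^ 2 ≠ η₂ ^ 2) (h13 : η₁ ^ 2 ≠ η₃ ^ 2) (h23 : η₂ ^ 2 ≠ η₃ ^ 2)
    (hc₁ : ∃ r : ℝ, c₁ = (r : ℂ) * η₁) (hc₂ : ∃ r : ℝ, c₂ = (r : ℂ) * η₂)
    (hc₃ : ∃ r : ℝ, c₃ = (r : ℂ) * η₃)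
    (hd₁ : d₁ ≠ 0) (hd₂ : d₂ ≠ 0) (hd₃ : d₃ ≠ 0)
    (hsum : d₁ + d₂ + d₃ = 0)
    (hp₁ : η₁ ^ 2 * d₁ = conj d₁) (hp₂ : η₂ ^ 2 * d₂ = conj d₂)
    (hp₃ : η₃ ^ 2 * d₃ = conj d₃) :
    (∃ F : ℂ, F + η₁ ^ 2 * conj F = 2 * c₁ ∧ F + η₂ ^ 2 * conj F = 2 * c₂ ∧
        F + η₃ ^ 2 * conj F = 2 * c₃) ↔
      c₁ * d₁ + c₂ * d₂ + c₃ * d₃ = 0 := by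
  have hne₁ : η₁ ≠ 0 := by intro h; simp [h] at hη₁
  have hne₂ : η₂ ≠ 0 := by intro h; simp [h] at hη₂
  have e₁ : η₁ * conj η₁ = 1 := by
    rw [Complex.mul_conj]; norm_cast; rw [Complex.normSq_eq_norm_sq, hη₁]; norm_num
  have e₂ : η₂ * conj η₂ = 1 := by
    rw [Complex.mul_conj]; norm_cast; rw [Complex.normSq_eq_norm_sq, hη₂]; norm_num
  have hcsum : conj d₁ + conj d₂ + conj d₃ = 0 := by
    rw [← map_add, ← map_add, hsum, map_zero]
  constructor
  · rintro ⟨F, h1, h2, h3⟩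
    have key : 2 * (c₁ * d₁ + c₂ * d₂ + c₃ * d₃)
        = F * (d₁ + d₂ + d₃) + conj F * (conj d₁ + conj d₂ + conj d₃) := by
      rw [← hp₁, ← hp₂, ← hp₃]
      calc 2 * (c₁ * d₁ + c₂ * d₂ + c₃ * d₃)
          = (2 * c₁) * d₁ + (2 * c₂) * d₂ + (2 * c₃) * d₃ := by ring
        _ = (F + η₁ ^ 2 * conj F) * d₁ + (F + η₂ ^ 2 * conj F) * d₂
            + (F + η₃ ^ 2 * conj F) * d₃ := by rw [h1, h2, h3]
        _ = _ := by ring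
    rw [hsum, hcsum] at key
    have h0 : (2 : ℂ) * (c₁ * d₁ + c₂ * d₂ + c₃ * d₃) = 0 := by rw [key]; ring
    exact (mul_eq_zero.mp h0).resolve_left two_ne_zero
  · intro hcd
    obtain ⟨r₁, hr₁⟩ := hc₁
    obtain ⟨r₂, hr₂⟩ := hc₂
    have hden : η₂ ^ 2 - η₁ ^ 2 ≠ 0 := sub_ne_zero.mpr (Ne.symm h12)
    set F : ℂ := 2 * ((r₁ : ℂ) * η₁ * η₂ ^ 2 - (r₂ : ℂ) * η₂ * η₁ ^ 2) / (η₂ ^ 2 - η₁ ^ 2)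
      with hF
    have hconj₁ : conj η₁ = η₁⁻¹ := by
      field_simp; linear_combination e₁
    have hconj₂ : conj η₂ = η₂⁻¹ := by
      field_simp; linear_combination e₂
    have hFdef : F * (η₂ ^ 2 - η₁ ^ 2)
        = 2 * ((r₁ : ℂ) * η₁ * η₂ ^ 2 - (r₂ : ℂ) * η₂ * η₁ ^ 2) := by
      rw [hF, div_mul_cancel₀ _ hden]
    have hCdef : conj F * ((η₂⁻¹) ^ 2 - (η₁⁻¹) ^ 2)
        = 2 * ((r₁ : ℂ) * η₁⁻¹ * (η₂⁻¹) ^ 2 - (r₂ : ℂ) * η₂⁻¹ * (η₁⁻¹) ^ 2) := by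
      have h := congrArg conj hFdef
      simpa only [map_mul, map_sub, map_pow, map_ofNat, Complex.conj_ofReal,
        hconj₁, hconj₂] using h
    have hCdef2 : conj F * (η₁ ^ 2 - η₂ ^ 2) = 2 * ((r₁ : ℂ) * η₁ - (r₂ : ℂ) * η₂) := by
      have h := congrArg (fun z => z * (η₁ ^ 2 * η₂ ^ 2)) hCdef
      field_simp at h
      refine mul_right_cancel₀ (b := η₁ ^ 5 * η₂ ^ 5)
        (mul_ne_zero (pow_ne_zero _ hne₁) (pow_ne_zero _ hne₂)) ?_
      linear_combination (η₁ ^ 5 * η₂ ^ 5) * h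
    have h1 : F + η₁ ^ 2 * conj F = 2 * c₁ := by
      rw [hr₁]
      refine mul_right_cancel₀ (sub_ne_zero.mpr h12) ?_
      linear_combination -hFdef + η₁ ^ 2 * hCdef2
    have h2 : F + η₂ ^ 2 * conj F = 2 * c₂ := by
      rw [hr₂]
      refine mul_right_cancel₀ (sub_ne_zero.mpr h12) ?_
      linear_combination -hFdef + η₂ ^ 2 * hCdef2
    refine ⟨F, h1, h2, ?_⟩
    have hd3 : d₃ = -(d₁ + d₂) := by linear_combination hsum
    have hcd3 : conj d₃ = -(conj d₁ + conj d₂) := by linear_combination hcsum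
    have key : (F + η₃ ^ 2 * conj F) * d₃ = (2 * c₃) * d₃ := by
      linear_combination conj F * hp₃ + F * hd3 + conj F * hcd3 - d₁ * h1 - d₂ * h2 +
        conj F * hp₁ + conj F * hp₂ - 2 * hcd
    exact mul_right_cancel₀ hd₃ key
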